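/- For any function f : ℝⁿ → ℝ that is bounded, Hölder continuous with exponent s ∈ (0,1), and square-integrable, the sup norm satisfies ‖f‖_∞ ≤ 2 |B₁|^{-s/(2s+n)} ‖f‖_{L²}^{s/(s+n/2)} ‖f‖_{C^s}^{(n/2)/(s+n/2)}, where |B₁| is the volume of the unit ball in ℝⁿ. -/

import Mathlib

open MeasureTheory Metric

/-- For any bounded, `s`-Hölder continuous, square-integrable `f : ℝⁿ → ℝ`,
`‖f‖_∞ ≤ 2 |B₁|^{-s/(2s+n)} ‖f‖_{L²}^{s/(s+n/2)} ‖f‖_{C^s}^{(n/2)/(s+n/2)}`,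
where the `C^s` norm is the sup norm `B` plus the Hölder seminorm `H`. -/
theorem stmt0 (n : ℕ) (hn : 0 < n) (s B H : ℝ) (hs : s ∈ Set.Ioo (0:ℝ) 1)
    (hB : 0 ≤ B) (hH : 0 ≤ H)
    (f : EuclideanSpace ℝ (Fin n) → ℝ)
    (hbd : ∀ x, |f x| ≤ B)
    (hhold : ∀ x y, |f x - f y| ≤ H * ‖x - y‖ ^ s)
    (hL2 : MemLp f 2 volume) :
    ∀ x, |f x| ≤
      2 * (volume (ball (0 : EuclideanSpace ℝ (Fin n)) 1)).toReal ^ (-(s / (2 * s + n)))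
        * (eLpNorm f 2 volume).toReal ^ (s / (s + n / 2))
        * (B + H) ^ ((n / 2) / (s + n / 2)) := by
  obtain ⟨hs0, hs1⟩ := hs
  intro x
  set V := (volume (ball (0 : EuclideanSpace ℝ (Fin n)) 1)).toReal with hVdef
  have hV : 0 < V :=
    ENNReal.toReal_pos (measure_ball_pos volume 0 one_pos).ne' measure_ball_lt_top.ne
  set N := (eLpNorm f 2 volume).toReal with hNdef
  have hN0 : 0 ≤ N := ENNReal.toReal_nonneg
  have hnpos : (0:ℝ) < n := by exact_mod_cast hn
  have hd : (0:ℝ) < 2 * s + n := by positivity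
  have he1 : s / (s + (n:ℝ) / 2) = 2 * s / (2 * s + (n:ℝ)) := by
    rw [div_eq_div_iff (by positivity) hd.ne']; ring
  have he2 : ((n:ℝ) / 2) / (s + (n:ℝ) / 2) = (n:ℝ) / (2 * s + (n:ℝ)) := by
    rw [div_eq_div_iff (by positivity) hd.ne']; ring
  rw [he1, he2]
  set M := |f x| with hMdef
  have hM0 : (0:ℝ) ≤ M := abs_nonneg (f x)
  rcases lt_or_eq_of_le hM0 with hM | hM
  swap
  · rw [← hM]
    have h1 : (0:ℝ) ≤ V ^ (-(s / (2 * s + (n:ℝ)))) := Real.rpow_nonneg hV.le _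
    have h2 : (0:ℝ) ≤ N ^ (2 * s / (2 * s + (n:ℝ))) := Real.rpow_nonneg hN0 _
    have h3 : (0:ℝ) ≤ (B + H) ^ ((n:ℝ) / (2 * s + (n:ℝ))) :=
      Real.rpow_nonneg (by linarith) _
    have := mul_nonneg (mul_nonneg (mul_nonneg (by norm_num : (0:ℝ) ≤ 2) h1) h2) h3
    linarith
  -- main case : 0 < M
  have hBH : 0 < B + H := by
    rcases lt_or_eq_of_le (by linarith : (0:ℝ) ≤ B + H) with h | h
    · exact h
    · exfalso
      have hB0 : B = 0 := by linarith
      have := hbd x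
      rw [hB0] at this
      linarith
  set C := B + H with hCdef
  have hhold' : ∀ y, |f x - f y| ≤ C * ‖x - y‖ ^ s := by
    intro y
    refine (hhold x y).trans ?_
    have h1 : (0:ℝ) ≤ ‖x - y‖ ^ s := Real.rpow_nonneg (norm_nonneg _) s
    nlinarith
  set r := (M / (2 * C)) ^ s⁻¹ with hrdef
  have hrpos : 0 < r := Real.rpow_pos_of_pos (by positivity) _
  have hrs : r ^ s = M / (2 * C) := Real.rpow_inv_rpow (by positivity) hs0.ne'
  -- lower bound on the ball
  have hlow : ∀ᵐ y ∂(volume.restrict (ball x r)), ‖(M/2 : ℝ)‖ ≤ ‖f y‖ := by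
    filter_upwards [ae_restrict_mem measurableSet_ball] with y hy
    have hxy : ‖x - y‖ ≤ r := by
      have h := mem_ball.mp hy
      rw [show ‖x - y‖ = dist x y from (dist_eq_norm x y).symm, dist_comm]
      exact h.le
    have h1 : |f x - f y| ≤ M / 2 := by
      calc |f x - f y| ≤ C * ‖x - y‖ ^ s := hhold' y
        _ ≤ C * r ^ s := by
            have := Real.rpow_le_rpow (norm_nonneg (x - y)) hxy hs0.le
            nlinarith [Real.rpow_nonneg (norm_nonneg (x - y)) s]
        _ = M / 2 := by rw [hrs]; field_simp
    have h2 := abs_sub_abs_le_abs_sub (f x) (f y)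
    rw [Real.norm_eq_abs, Real.norm_eq_abs, abs_of_pos (by linarith : (0:ℝ) < M/2)]
    linarith [abs_nonneg (f y)]
  have hμ0 : volume.restrict (ball x r) ≠ 0 := by
    intro h
    exact (measure_ball_pos volume x hrpos).ne' (Measure.restrict_eq_zero.mp h)
  have hc : eLpNorm (fun _ : EuclideanSpace ℝ (Fin n) => (M/2 : ℝ)) 2
      (volume.restrict (ball x r))
      = ENNReal.ofReal (M/2) * (volume (ball x r)) ^ ((1:ℝ)/2) := by
    rw [eLpNorm_const _ two_ne_zero hμ0]
    congr 1
    · rw [Real.enorm_eq_ofReal (by linarith : (0:ℝ) ≤ M/2)]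
    · rw [Measure.restrict_apply_univ]
      norm_num
  have hkey : ENNReal.ofReal (M/2) * (volume (ball x r)) ^ ((1:ℝ)/2)
      ≤ eLpNorm f 2 volume := by
    calc ENNReal.ofReal (M/2) * (volume (ball x r)) ^ ((1:ℝ)/2)
        = eLpNorm (fun _ : EuclideanSpace ℝ (Fin n) => (M/2 : ℝ)) 2
            (volume.restrict (ball x r)) := hc.symm
      _ ≤ eLpNorm f 2 (volume.restrict (ball x r)) := eLpNorm_mono_ae hlow
      _ ≤ eLpNorm f 2 volume := eLpNorm_mono_measure f Measure.restrict_le_self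
  haveI : Nonempty (Fin n) := Fin.pos_iff_nonempty.mp hn
  have hball : volume (ball x r) = ENNReal.ofReal (r ^ n) * volume
      (ball (0 : EuclideanSpace ℝ (Fin n)) 1) := by
    rw [Measure.addHaar_ball volume x hrpos.le, finrank_euclideanSpace_fin]
  have hreal : (M/2) * ((r ^ n) * V) ^ ((1:ℝ)/2) ≤ N := by
    have h := ENNReal.toReal_mono hL2.2.ne hkey
    rw [ENNReal.toReal_mul, ← ENNReal.toReal_rpow, hball, ENNReal.toReal_mul,
      ENNReal.toReal_ofReal (by linarith : (0:ℝ) ≤ M/2),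
      ENNReal.toReal_ofReal (pow_nonneg hrpos.le n)] at h
    exact h
  have hNpos : 0 < N := lt_of_lt_of_le (by positivity) hreal
  -- pass to logarithms
  set lM := Real.log M with hlM
  set l2 := Real.log 2 with hl2
  set lV := Real.log V with hlV
  set lN := Real.log N with hlN
  set lC := Real.log C with hlC
  set lr := Real.log r with hlr
  have hlogr : s * lr = lM - (l2 + lC) := by
    rw [hlr, ← Real.log_rpow hrpos, hrs, hlM, hl2, hlC,
      Real.log_div hM.ne' (by positivity), Real.log_mul two_ne_zero hBH.ne']
  have hlog1 : Real.log ((M/2) * ((r ^ n) * V) ^ ((1:ℝ)/2)) ≤ lN :=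
    Real.log_le_log (by positivity) hreal
  have hLexp : Real.log ((M/2) * ((r ^ n) * V) ^ ((1:ℝ)/2))
      = (lM - l2) + (1/2) * ((n:ℝ) * lr + lV) := by
    rw [Real.log_mul (by positivity) (by positivity),
      Real.log_rpow (by positivity),
      Real.log_mul (by positivity) hV.ne',
      Real.log_pow, Real.log_div hM.ne' two_ne_zero]
  rw [hLexp] at hlog1
  clear_value lM l2 lV lN lC lr
  have h3 : 2 * s * ((lM - l2) + (1/2) * ((n:ℝ) * lr + lV)) ≤ 2 * s * lN :=
    mul_le_mul_of_nonneg_left hlog1 (by positivity)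
  have h4 : (n:ℝ) * (s * lr) = (n:ℝ) * (lM - (l2 + lC)) := by rw [hlogr]
  have hgoal' : (2 * s + (n:ℝ)) * lM
      ≤ (2 * s + (n:ℝ)) * l2 - s * lV + 2 * s * lN + (n:ℝ) * lC := by
    linarith [h3, h4]
  -- reconstruct the target from the log inequality
  have hlogfin : lM ≤ l2 + lV * (-(s / (2 * s + (n:ℝ)))) + lN * (2 * s / (2 * s + (n:ℝ)))
      + lC * ((n:ℝ) / (2 * s + (n:ℝ))) := by
    rw [← sub_nonneg]
    have expand : l2 + lV * (-(s / (2 * s + (n:ℝ)))) + lN * (2 * s / (2 * s + (n:ℝ)))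
        + lC * ((n:ℝ) / (2 * s + (n:ℝ))) - lM
        = (((2 * s + (n:ℝ)) * l2 - s * lV + 2 * s * lN + (n:ℝ) * lC)
            - (2 * s + (n:ℝ)) * lM) / (2 * s + (n:ℝ)) := by
      field_simp
      ring
    rw [expand]
    exact div_nonneg (by linarith) hd.le
  have hRHS : 2 * V ^ (-(s / (2 * s + (n:ℝ)))) * N ^ (2 * s / (2 * s + (n:ℝ)))
      * C ^ ((n:ℝ) / (2 * s + (n:ℝ)))
      = Real.exp (l2 + lV * (-(s / (2 * s + (n:ℝ)))) + lN * (2 * s / (2 * s + (n:ℝ)))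
        + lC * ((n:ℝ) / (2 * s + (n:ℝ)))) := by
    rw [Real.exp_add, Real.exp_add, Real.exp_add, hl2, Real.exp_log two_pos,
      hlV, ← Real.rpow_def_of_pos hV, hlN, ← Real.rpow_def_of_pos hNpos,
      hlC, ← Real.rpow_def_of_pos hBH]
  calc M = Real.exp lM := by rw [hlM, Real.exp_log hM]
    _ ≤ Real.exp (l2 + lV * (-(s / (2 * s + (n:ℝ)))) + lN * (2 * s / (2 * s + (n:ℝ)))
        + lC * ((n:ℝ) / (2 * s + (n:ℝ)))) := Real.exp_le_exp.mpr hlogfin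
    _ = 2 * V ^ (-(s / (2 * s + (n:ℝ)))) * N ^ (2 * s / (2 * s + (n:ℝ)))
        * C ^ ((n:ℝ) / (2 * s + (n:ℝ))) := hRHS.symm
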